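/- Let δ ∈ [0,1), let 0 < c₁ ≤ c₂ and d₁ > 0, and let (Y_t)_{t∈(0,t₀)} be a family of real random variables with finite fourth moments such that for all t ∈ (0,t₀): |E[Y_t]| ≤ d₁·t, c₁·t^(1+δ) ≤ E[Y_t²] ≤ c₂·t^(1+δ), E[|Y_t|³] ≤ c₂·t^(2δ+1), and c₁·t^(3δ+1) ≤ E[Y_t⁴] ≤ c₂·t^(3δ+1). Then there exist a constant C > 0 and t₁ ∈ (0,t₀] such that the kurtosis κ_t := E[(Y_t − E[Y_t])⁴] / (Var[Y_t])² satisfies κ_t ≤ C·t^(δ−1) for all t ∈ (0,t₁); i.e., κ_t = O(t^(δ−1)) as t → 0⁺. -/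

import Mathlib

open MeasureTheory ProbabilityTheory Set

/-- Abstract core of the kurtosis reduction of MLMC with importance sampling:
under first, second, third and fourth moment scalings in the time step `t`,
the kurtosis of `Y_t` is `O(t^(δ-1))` as `t → 0⁺`. -/
theorem mlmc_is_kurtosis_rate
    {Ω : Type*} [MeasurableSpace Ω] (P : Measure Ω) [IsProbabilityMeasure P]
    (δ : ℝ) (hδ0 : 0 ≤ δ) (hδ1 : δ < 1)
    (c₁ c₂ d₁ t₀ : ℝ) (hc₁ : 0 < c₁) (hc₁₂ : c₁ ≤ c₂) (hd₁ : 0 < d₁) (ht₀ : 0 < t₀)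
    (Y : ℝ → Ω → ℝ)
    (hL4 : ∀ t ∈ Ioo (0 : ℝ) t₀, MemLp (Y t) 4 P)
    (hmean : ∀ t ∈ Ioo (0 : ℝ) t₀, |∫ ω, Y t ω ∂P| ≤ d₁ * t)
    (hm2_lb : ∀ t ∈ Ioo (0 : ℝ) t₀, c₁ * t ^ (1 + δ) ≤ ∫ ω, (Y t ω) ^ 2 ∂P)
    (hm2_ub : ∀ t ∈ Ioo (0 : ℝ) t₀, ∫ ω, (Y t ω) ^ 2 ∂P ≤ c₂ * t ^ (1 + δ))
    (hm3_ub : ∀ t ∈ Ioo (0 : ℝ) t₀, ∫ ω, |Y t ω| ^ 3 ∂P ≤ c₂ * t ^ (2 * δ + 1))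
    (hm4_lb : ∀ t ∈ Ioo (0 : ℝ) t₀, c₁ * t ^ (3 * δ + 1) ≤ ∫ ω, (Y t ω) ^ 4 ∂P)
    (hm4_ub : ∀ t ∈ Ioo (0 : ℝ) t₀, ∫ ω, (Y t ω) ^ 4 ∂P ≤ c₂ * t ^ (3 * δ + 1)) :
    ∃ C : ℝ, 0 < C ∧ ∃ t₁ : ℝ, 0 < t₁ ∧ t₁ ≤ t₀ ∧ ∀ t : ℝ, 0 < t → t < t₁ →
      (∫ ω, (Y t ω - ∫ x, Y t x ∂P) ^ 4 ∂P) / (variance (Y t) P) ^ 2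
        ≤ C * t ^ (δ - 1) := by
  have h1δ : (0:ℝ) < 1 - δ := by linarith
  set ε : ℝ := (c₁ / (2 * d₁ ^ 2)) ^ ((1:ℝ) / (1 - δ)) with hεdef
  have hεpos : 0 < ε := Real.rpow_pos_of_pos (by positivity) _
  have hεpow : ε ^ (1 - δ) = c₁ / (2 * d₁ ^ 2) := by
    rw [hεdef, one_div, Real.rpow_inv_rpow (by positivity) (by linarith)]
  have hc₂ : 0 < c₂ := hc₁.trans_le hc₁₂
  refine ⟨8 * (c₂ + d₁ ^ 4) * (4 / c₁ ^ 2),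
    mul_pos (mul_pos (by norm_num) (by positivity)) (by positivity),
    min t₀ (min 1 ε), lt_min ht₀ (lt_min one_pos hεpos), min_le_left _ _, ?_⟩
  intro t ht htlt
  have ht0 : t ∈ Ioo (0:ℝ) t₀ := ⟨ht, lt_of_lt_of_le htlt (min_le_left _ _)⟩
  have ht1 : t < 1 := lt_of_lt_of_le htlt ((min_le_right _ _).trans (min_le_left _ _))
  have htε : t < ε := lt_of_lt_of_le htlt ((min_le_right _ _).trans (min_le_right _ _))
  set f := Y t with hfdef
  set m := ∫ ω, f ω ∂P with hmdef
  have hf4 : MemLp f 4 P := hL4 t ht0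
  have hf2 : MemLp f 2 P := hf4.mono_exponent (by norm_num)
  have hm : |m| ≤ d₁ * t := hmean t ht0
  have hm2 : m ^ 2 ≤ (d₁ * t) ^ 2 := by
    rw [← sq_abs m]; exact pow_le_pow_left₀ (abs_nonneg m) hm 2
  have htpos : (0:ℝ) < t ^ (1 + δ) := Real.rpow_pos_of_pos ht _
  -- t^2 ≤ (c₁/(2 d₁²)) t^(1+δ)
  have ht2 : t ^ (2:ℕ) ≤ c₁ / (2 * d₁ ^ 2) * t ^ (1 + δ) := by
    have h1 : (t:ℝ) ^ (2:ℕ) = t ^ ((1 - δ) + (1 + δ)) := by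
      rw [← Real.rpow_natCast t 2]; norm_num
    rw [h1, Real.rpow_add ht]
    have h2 : t ^ (1 - δ) ≤ ε ^ (1 - δ) :=
      Real.rpow_le_rpow ht.le htε.le h1δ.le
    rw [hεpow] at h2
    exact mul_le_mul_of_nonneg_right h2 htpos.le
  -- variance lower bound
  have hvar : variance f P = (∫ ω, f ω ^ 2 ∂P) - m ^ 2 := by
    rw [variance_eq_sub hf2]; simp [hmdef]
  have hvarlb : c₁ / 2 * t ^ (1 + δ) ≤ variance f P := by
    rw [hvar]
    have h3 : m ^ 2 ≤ c₁ / 2 * t ^ (1 + δ) := by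
      calc m ^ 2 ≤ (d₁ * t) ^ 2 := hm2
        _ = d₁ ^ 2 * t ^ (2:ℕ) := by ring
        _ ≤ d₁ ^ 2 * (c₁ / (2 * d₁ ^ 2) * t ^ (1 + δ)) :=
            mul_le_mul_of_nonneg_left ht2 (by positivity)
        _ = c₁ / 2 * t ^ (1 + δ) := by field_simp
    have := hm2_lb t ht0
    rw [← hfdef] at this
    linarith
  have hvarpos : 0 < variance f P := lt_of_lt_of_le (by positivity) hvarlb
  -- integrability of f^4 and (f-m)^4
  have int_pow4 : ∀ (g : Ω → ℝ), MemLp g 4 P → Integrable (fun ω => g ω ^ 4) P := by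
    intro g hg
    have h := hg.integrable_norm_rpow (by norm_num) (by norm_num)
    have heq : (fun x => ‖g x‖ ^ ENNReal.toReal 4) = fun ω => g ω ^ 4 := by
      funext ω
      rw [Real.norm_eq_abs, show ENNReal.toReal 4 = ((4:ℕ):ℝ) by norm_num,
        Real.rpow_natCast, ← abs_pow, abs_of_nonneg (by positivity)]
    rwa [heq] at h
  have hg4 : MemLp (fun ω => f ω - m) 4 P := hf4.sub (memLp_const m)
  have int_f4 : Integrable (fun ω => f ω ^ 4) P := int_pow4 f hf4
  have int_g4 : Integrable (fun ω => (f ω - m) ^ 4) P := int_pow4 _ hg4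
  -- numerator bound
  have hnum : (∫ ω, (f ω - m) ^ 4 ∂P) ≤ 8 * (c₂ + d₁ ^ 4) * t ^ (3 * δ + 1) := by
    have hpt : ∀ ω, (f ω - m) ^ 4 ≤ 8 * f ω ^ 4 + 8 * m ^ 4 := by
      intro ω
      nlinarith [sq_nonneg (f ω + m), sq_nonneg (f ω - m), sq_nonneg (f ω ^ 2 - m ^ 2),
        sq_nonneg (f ω ^ 2 + m ^ 2), sq_nonneg ((f ω - m) ^ 2), sq_nonneg (f ω * m)]
    have h4 : (∫ ω, (f ω - m) ^ 4 ∂P) ≤ ∫ ω, (8 * f ω ^ 4 + 8 * m ^ 4) ∂P :=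
      integral_mono int_g4 ((int_f4.const_mul 8).add (integrable_const _)) hpt
    have h5 : (∫ ω, (8 * f ω ^ 4 + 8 * m ^ 4) ∂P) = 8 * (∫ ω, f ω ^ 4 ∂P) + 8 * m ^ 4 := by
      rw [integral_add (int_f4.const_mul 8) (integrable_const _)]
      simp [integral_const_mul]
    have h6 : (∫ ω, f ω ^ 4 ∂P) ≤ c₂ * t ^ (3 * δ + 1) := hm4_ub t ht0
    have h7 : m ^ 4 ≤ d₁ ^ 4 * t ^ (3 * δ + 1) := by
      have h8 : m ^ 4 = (m ^ 2) ^ 2 := by ring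
      have h9 : m ^ 4 ≤ (d₁ * t) ^ 4 := by
        rw [h8, show ((d₁*t)^4 : ℝ) = ((d₁*t)^2)^2 by ring]
        exact pow_le_pow_left₀ (sq_nonneg m) hm2 2
      have h10 : t ^ (4:ℕ) ≤ t ^ (3 * δ + 1) := by
        rw [← Real.rpow_natCast t 4]
        exact Real.rpow_le_rpow_of_exponent_ge ht ht1.le (by push_cast; linarith)
      calc m ^ 4 ≤ (d₁ * t) ^ 4 := h9
        _ = d₁ ^ 4 * t ^ (4:ℕ) := by ring
        _ ≤ d₁ ^ 4 * t ^ (3 * δ + 1) := mul_le_mul_of_nonneg_left h10 (by positivity)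
    calc (∫ ω, (f ω - m) ^ 4 ∂P) ≤ 8 * (∫ ω, f ω ^ 4 ∂P) + 8 * m ^ 4 := h4.trans_eq h5
      _ ≤ 8 * (c₂ * t ^ (3 * δ + 1)) + 8 * (d₁ ^ 4 * t ^ (3 * δ + 1)) := by
          have := Real.rpow_pos_of_pos ht (3 * δ + 1)
          nlinarith
      _ = 8 * (c₂ + d₁ ^ 4) * t ^ (3 * δ + 1) := by ring
  -- conclude
  rw [div_le_iff₀ (by positivity)]
  have hvsq : (c₁ / 2 * t ^ (1 + δ)) ^ 2 ≤ variance f P ^ 2 :=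
    pow_le_pow_left₀ (mul_nonneg (by positivity) htpos.le) hvarlb 2
  have hC : (0:ℝ) ≤ 8 * (c₂ + d₁ ^ 4) * (4 / c₁ ^ 2) * t ^ (δ - 1) :=
    mul_nonneg (by positivity) (Real.rpow_nonneg ht.le _)
  calc (∫ ω, (f ω - m) ^ 4 ∂P) ≤ 8 * (c₂ + d₁ ^ 4) * t ^ (3 * δ + 1) := hnum
    _ = 8 * (c₂ + d₁ ^ 4) * (4 / c₁ ^ 2) * t ^ (δ - 1) * (c₁ / 2 * t ^ (1 + δ)) ^ 2 := by
        rw [mul_pow, ← Real.rpow_natCast (t ^ (1 + δ)) 2, ← Real.rpow_mul ht.le]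
        rw [show 8 * (c₂ + d₁ ^ 4) * (4 / c₁ ^ 2) * t ^ (δ - 1) *
              ((c₁ / 2) ^ 2 * t ^ ((1 + δ) * ((2:ℕ):ℝ))) =
            8 * (c₂ + d₁ ^ 4) * (4 / c₁ ^ 2) * (c₁ / 2) ^ 2 *
              (t ^ (δ - 1) * t ^ ((1 + δ) * ((2:ℕ):ℝ))) from by ring]
        rw [← Real.rpow_add ht,
          show δ - 1 + (1 + δ) * ((2:ℕ):ℝ) = 3 * δ + 1 from by push_cast; ring]
        field_simp
        ring
    _ ≤ 8 * (c₂ + d₁ ^ 4) * (4 / c₁ ^ 2) * t ^ (δ - 1) * variance f P ^ 2 :=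
        mul_le_mul_of_nonneg_left hvsq hC
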